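/- Let n ≥ 0 and let α_0, α_1, …, α_m be integers with α_0 ≥ 0, α_i > 0 for 1 ≤ i ≤ m, and α_0 + α_1 + ⋯ + α_m = n. Then K[α_0+1, α_1, …, α_{m−1}, α_m+1] ≤ F_{n+1}, with equality if and only if (m = n, α_0 = 0 and α_1 = ⋯ = α_n = 1) or (m = n−1 and α_0 = α_1 = ⋯ = α_{n−1} = 1). -/

import Mathlib

def palClosure (w : List Bool) : List Bool :=
  let k := Nat.find (p := fun k => (w.drop k).reverse = w.drop k)
    ⟨w.length, by simp⟩
  w.take k ++ w.drop k ++ (w.take k).reverse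

def psi (v : List Bool) : List Bool := v.foldl (fun w x => palClosure (w ++ [x])) []

def E (v : List Bool) : List Bool := v.map (!·)

def mu (x : Bool) (w : List Bool) : List Bool := w.flatMap (fun y => if y = x then [x] else [x, y])

def muW : List Bool → List Bool → List Bool
  | [], w => w
  | x :: v, w => mu x (muW v w)

def vN (n : ℕ) : List Bool := (List.range n).map (fun i => decide (i % 2 = 1))

def fibF : ℕ → ℕ
  | 0 => 1
  | 1 => 1
  | n + 2 => fibF (n + 1) + fibF n

def HasPeriod (w : List Bool) (p : ℕ) : Prop :=
  0 < p ∧ ∀ i j (hi : i < w.length) (hj : j < w.length),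
    i % p = j % p → w.get ⟨i, hi⟩ = w.get ⟨j, hj⟩

noncomputable def minPeriod (w : List Bool) : ℕ := sInf {p | HasPeriod w p}

def dOp : List Bool → List Bool
  | x :: y :: u => y :: x :: u
  | w => w

def cOp (v : List Bool) : List Bool := (dOp v.reverse).reverse

def contAux : List ℕ → ℕ
  | [] => 1
  | [a] => a
  | a :: b :: t => a * contAux (b :: t) + contAux t

def continuant (l : List ℕ) : ℕ := contAux l.reverse

lemma fibF_add (n : ℕ) : fibF (n + 2) = fibF (n + 1) + fibF n := rfl

lemma fibF_pos : ∀ n, 0 < fibF n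
  | 0 => Nat.one_pos
  | 1 => Nat.one_pos
  | n + 2 => by rw [fibF_add]; exact Nat.add_pos_left (fibF_pos (n + 1)) _

lemma fibF_le_succ : ∀ n, fibF n ≤ fibF (n + 1)
  | 0 => le_refl 1
  | n + 1 => by rw [fibF_add]; exact Nat.le_add_right _ _

lemma fibF_mono : Monotone fibF := monotone_nat_of_le_succ fibF_le_succ

lemma fibF_lt_succ (n : ℕ) : fibF (n + 1) < fibF (n + 2) := by
  rw [fibF_add]; have := fibF_pos n; omega

lemma fibF_lt_of_lt {a b : ℕ} (h1 : 1 ≤ a) (h2 : a < b) : fibF a < fibF b := by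
  rcases a with _ | k
  · omega
  · exact lt_of_lt_of_le (fibF_lt_succ k) (fibF_mono (by omega))

lemma le_fibF : ∀ n, n ≤ fibF n
  | 0 => by simp [fibF]
  | 1 => le_refl 1
  | n + 2 => by
      rw [fibF_add]
      have h1 := le_fibF (n + 1)
      have h2 := fibF_pos n
      omega

lemma two_le_fibF {n : ℕ} (h : 2 ≤ n) : 2 ≤ fibF n :=
  le_trans (le_of_eq (by decide : (2:ℕ) = fibF 2)) (fibF_mono h)

lemma fibF_eq_iff (n : ℕ) : fibF n = n ↔ 1 ≤ n ∧ n ≤ 3 := by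
  have key : ∀ m, 4 ≤ m → m < fibF m := by
    intro m hm
    obtain ⟨k, rfl⟩ : ∃ k, m = k + 4 := ⟨m - 4, by omega⟩
    have h1 := le_fibF (k + 3)
    have h2 : 2 ≤ fibF (k + 2) := two_le_fibF (by omega)
    have h3 : fibF (k + 4) = fibF (k + 3) + fibF (k + 2) := by
      have h' := fibF_add (k + 2)
      have e1 : k + 2 + 2 = k + 4 := by omega
      have e2 : k + 2 + 1 = k + 3 := by omega
      rw [e1, e2] at h'
      exact h'
    omega
  constructor
  · intro h
    have h0 : n ≠ 0 := by intro h0; subst h0; simp [fibF] at h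
    have h4 : ¬ 4 ≤ n := fun hn => by have := key n hn; omega
    omega
  · rintro ⟨h1, h3⟩
    interval_cases n <;> decide

lemma contAux_nil : contAux [] = 1 := rfl
lemma contAux_single (a : ℕ) : contAux [a] = a := rfl
lemma contAux_cons_cons (a b : ℕ) (t : List ℕ) :
    contAux (a :: b :: t) = a * contAux (b :: t) + contAux t := rfl

lemma contAux_succ (a : ℕ) (t : List ℕ) :
    contAux ((a + 1) :: t) = contAux (a :: t) + contAux t := by
  cases t with
  | nil => simp [contAux]
  | cons b t => rw [contAux_cons_cons, contAux_cons_cons]; ring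

def Qal : List ℕ → Prop
  | [] => True
  | [a] => a ≤ 2
  | a :: b :: t => a = 1 ∧ Qal (b :: t)

def Pal : List ℕ → Prop
  | [] => True
  | [a] => a ≤ 3
  | a :: b :: t => a ≤ 2 ∧ Qal (b :: t)

@[simp] lemma Qal_nil : Qal [] ↔ True := Iff.rfl
@[simp] lemma Qal_single (a : ℕ) : Qal [a] ↔ a ≤ 2 := Iff.rfl
@[simp] lemma Qal_cons_cons (a b : ℕ) (t : List ℕ) :
    Qal (a :: b :: t) ↔ a = 1 ∧ Qal (b :: t) := Iff.rfl
@[simp] lemma Pal_nil : Pal [] ↔ True := Iff.rfl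
@[simp] lemma Pal_single (a : ℕ) : Pal [a] ↔ a ≤ 3 := Iff.rfl
@[simp] lemma Pal_cons_cons (a b : ℕ) (t : List ℕ) :
    Pal (a :: b :: t) ↔ a ≤ 2 ∧ Qal (b :: t) := Iff.rfl

lemma Qal_imp_Pal : ∀ l, Qal l → Pal l
  | [], _ => trivial
  | [a], h => by simp at h ⊢; omega
  | _ :: _ :: _, h => by
      simp at h ⊢
      exact ⟨by omega, h.2⟩

lemma contAux_le_fibF : ∀ s : ℕ, ∀ l : List ℕ, (∀ x ∈ l, 1 ≤ x) → l.sum = s →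
    contAux l ≤ fibF s ∧ (contAux l = fibF s ↔ Pal l) := by
  intro s
  induction s using Nat.strong_induction_on with
  | _ s ih =>
    intro l hpos hsum
    rcases l with _ | ⟨a, _ | ⟨b, t⟩⟩
    · simp at hsum
      subst hsum
      simp [contAux, fibF]
    · have ha : 1 ≤ a := hpos a (by simp)
      simp at hsum
      subst hsum
      rw [contAux_single]
      refine ⟨le_fibF a, ?_⟩
      constructor
      · intro h
        have := (fibF_eq_iff a).mp h.symm
        simp
        omega
      · intro h
        simp at h
        exact ((fibF_eq_iff a).mpr ⟨ha, h⟩).symm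
    · have ha : 1 ≤ a := hpos a (by simp)
      have hb : 1 ≤ b := hpos b (by simp)
      have hbt : ∀ x ∈ b :: t, 1 ≤ x := fun x hx => hpos x (List.mem_cons_of_mem _ hx)
      have ht : ∀ x ∈ t, 1 ≤ x := fun x hx => hbt x (List.mem_cons_of_mem _ hx)
      have hbtsum : (b :: t).sum = b + t.sum := by simp
      have hs : a + (b + t.sum) = s := by simpa using hsum
      by_cases ha1 : a = 1
      · subst ha1
        -- a = 1
        have hIH1 := ih (b + t.sum) (by omega) (b :: t) hbt (by simp)
        have hIH2 := ih t.sum (by omega) t ht rfl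
        have hrec : contAux (1 :: b :: t) = contAux (b :: t) + contAux t := by
          rw [contAux_cons_cons]; ring
        have hfib : fibF s = fibF (b + t.sum) + fibF (b + t.sum - 1) := by
          have h' := fibF_add (b + t.sum - 1)
          have e1 : b + t.sum - 1 + 2 = s := by omega
          have e2 : b + t.sum - 1 + 1 = b + t.sum := by omega
          rw [e1, e2] at h'
          exact h'
        have hmono : fibF t.sum ≤ fibF (b + t.sum - 1) := fibF_mono (by omega)
        have hb1 : contAux (b :: t) ≤ fibF (b + t.sum) := hIH1.1
        have hb2 : contAux t ≤ fibF (b + t.sum - 1) := le_trans hIH2.1 hmono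
        refine ⟨by omega, ?_⟩
        constructor
        · intro h
          have e1 : contAux (b :: t) = fibF (b + t.sum) := by omega
          have e2 : contAux t = fibF (b + t.sum - 1) := by omega
          have hPbt : Pal (b :: t) := hIH1.2.mp e1
          rw [Pal_cons_cons]
          refine ⟨by omega, ?_⟩
          rcases t with _ | ⟨c, t'⟩
          · -- t = []
            rw [Qal_single]
            by_contra hb2'
            have h3 : 2 ≤ fibF (b + List.sum ([] : List ℕ) - 1) :=
              two_le_fibF (by simp; omega)
            rw [contAux_nil] at e2
            omega
          · have hc : 1 ≤ c := ht c (by simp)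
            have hcsum : (c :: t').sum = c + t'.sum := by simp
            have hb1' : b = 1 := by
              by_contra hbne
              have hlt : fibF ((c :: t').sum) < fibF (b + (c :: t').sum - 1) :=
                fibF_lt_of_lt (by omega) (by omega)
              have := hIH2.1
              omega
            subst hb1'
            rw [Qal_cons_cons]
            refine ⟨rfl, ?_⟩
            rw [Pal_cons_cons] at hPbt
            exact hPbt.2
        · intro hP
          rw [Pal_cons_cons] at hP
          have hQ := hP.2
          have e1 : contAux (b :: t) = fibF (b + t.sum) := hIH1.2.mpr (Qal_imp_Pal _ hQ)
          have e2 : contAux t = fibF (b + t.sum - 1) := by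
            rcases t with _ | ⟨c, t'⟩
            · rw [Qal_single] at hQ
              rw [contAux_nil]
              simp only [List.sum_nil]
              interval_cases b <;> decide
            · rw [Qal_cons_cons] at hQ
              obtain ⟨rfl, hQ'⟩ := hQ
              have := hIH2.2.mpr (Qal_imp_Pal _ hQ')
              have e3 : 1 + (c :: t').sum - 1 = (c :: t').sum := by omega
              rw [e3]
              exact this
          omega
      · -- a ≥ 2
        obtain ⟨c, rfl⟩ : ∃ c, a = c + 2 := ⟨a - 2, by omega⟩
        have hIH1 := ih (c + 1 + (b + t.sum)) (by omega) ((c + 1) :: b :: t)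
          (by
            intro x hx
            simp only [List.mem_cons] at hx
            rcases hx with rfl | hx
            · omega
            · exact hbt x (List.mem_cons.mpr hx))
          (by simp)
        have hIH2 := ih (b + t.sum) (by omega) (b :: t) hbt (by simp)
        have hrec : contAux ((c + 2) :: b :: t)
            = contAux ((c + 1) :: b :: t) + contAux (b :: t) := by
          have := contAux_succ (c + 1) (b :: t)
          simpa using this
        have hfib : fibF s = fibF (c + 1 + (b + t.sum)) + fibF (c + (b + t.sum)) := by
          have h' := fibF_add (c + (b + t.sum))
          have e1 : c + (b + t.sum) + 2 = s := by omega
          have e2 : c + (b + t.sum) + 1 = c + 1 + (b + t.sum) := by omega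
          rw [e1, e2] at h'
          exact h'
        have hmono : fibF (b + t.sum) ≤ fibF (c + (b + t.sum)) := fibF_mono (by omega)
        have hb1 : contAux ((c + 1) :: b :: t) ≤ fibF (c + 1 + (b + t.sum)) := hIH1.1
        have hb2 : contAux (b :: t) ≤ fibF (c + (b + t.sum)) := le_trans hIH2.1 hmono
        refine ⟨by omega, ?_⟩
        by_cases hc0 : c = 0
        · subst hc0
          simp only [Nat.zero_add] at hIH1 hrec hfib hmono hb1 hb2 ⊢
          constructor
          · intro h
            have e1 : contAux (1 :: b :: t) = fibF (1 + (b + t.sum)) := by omega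
            have hP1 : Pal (1 :: b :: t) := hIH1.2.mp e1
            rw [Pal_cons_cons] at hP1 ⊢
            exact ⟨by omega, hP1.2⟩
          · intro hP
            rw [Pal_cons_cons] at hP
            have e1 : contAux (1 :: b :: t) = fibF (1 + (b + t.sum)) := by
              apply hIH1.2.mpr
              rw [Pal_cons_cons]
              exact ⟨by omega, hP.2⟩
            have e2 : contAux (b :: t) = fibF (b + t.sum) :=
              hIH2.2.mpr (Qal_imp_Pal _ hP.2)
            omega
        · -- c ≥ 1 : strict inequality
          have hstrict : fibF (b + t.sum) < fibF (c + (b + t.sum)) :=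
            fibF_lt_of_lt (by omega) (by omega)
          constructor
          · intro h
            have := hIH2.1
            omega
          · intro hP
            rw [Pal_cons_cons] at hP
            omega

lemma Qal_iff_get : ∀ l : List ℕ, Qal l ↔ ∀ i (h : i < l.length),
    (i + 1 < l.length → l[i] = 1) ∧ (i + 1 = l.length → l[i] ≤ 2)
  | [] => by simp
  | [a] => by
      rw [Qal_single]
      constructor
      · intro hq i h
        simp only [List.length_singleton] at h
        interval_cases i
        exact ⟨fun h' => by simp at h', fun _ => by simpa using hq⟩
      · intro h
        simpa using (h 0 (by simp)).2 (by simp)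
  | a :: b :: t => by
      rw [Qal_cons_cons, Qal_iff_get (b :: t)]
      constructor
      · rintro ⟨rfl, hrest⟩ i h
        cases i with
        | zero =>
          refine ⟨fun _ => by simp, fun h1 => ?_⟩
          simp at h1
        | succ j =>
          have hj : j < (b :: t).length := by simp at h ⊢; omega
          have hthis := hrest j hj
          simp only [List.getElem_cons_succ]
          constructor
          · intro h2
            exact hthis.1 (by simp at h2 ⊢; omega)
          · intro h2
            exact hthis.2 (by simp at h2 ⊢; omega)
      · intro H
        have h0 : a = 1 := by
          have := (H 0 (by simp)).1 (by simp)
          simpa using this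
        refine ⟨h0, fun j hj => ?_⟩
        have hthis := H (j + 1) (by simp at hj ⊢; omega)
        simp only [List.getElem_cons_succ] at hthis
        exact ⟨fun h2 => hthis.1 (by simp at h2 ⊢; omega),
               fun h2 => hthis.2 (by simp at h2 ⊢; omega)⟩

lemma Pal_iff_get (l : List ℕ) (hl : 2 ≤ l.length) : Pal l ↔ ∀ i (h : i < l.length),
    (0 < i → i + 1 < l.length → l[i] = 1) ∧ (i = 0 ∨ i + 1 = l.length → l[i] ≤ 2) := by
  rcases l with _ | ⟨a, _ | ⟨b, t⟩⟩
  · simp at hl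
  · simp at hl
  · rw [Pal_cons_cons, Qal_iff_get (b :: t)]
    constructor
    · rintro ⟨h2, hq⟩ i h
      cases i with
      | zero =>
        exact ⟨fun h0 _ => absurd h0 (lt_irrefl 0), fun _ => by simpa using h2⟩
      | succ j =>
        have hj : j < (b :: t).length := by simp at h ⊢; omega
        obtain ⟨q1, q2⟩ := hq j hj
        simp only [List.getElem_cons_succ]
        refine ⟨fun _ hlt => q1 (by simp at hlt ⊢; omega), ?_⟩
        rintro (h0 | hlast)
        · omega
        · exact q2 (by simp at hlast ⊢; omega)
    · intro h
      refine ⟨by exact (h 0 (by simp)).2 (Or.inl rfl), fun j hj => ?_⟩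
      obtain ⟨q1, q2⟩ := h (j + 1) (by simp at hj ⊢; omega)
      simp only [List.getElem_cons_succ] at q1 q2
      exact ⟨fun hlt => q1 (by omega) (by simp at hlt ⊢; omega),
             fun hl' => q2 (Or.inr (by simp at hl' ⊢; omega))⟩

lemma list_sum_map_range (f : ℕ → ℕ) : ∀ k, ((List.range k).map f).sum = ∑ i ∈ Finset.range k, f i
  | 0 => by simp
  | k + 1 => by
      rw [Finset.sum_range_succ, List.range_succ]
      simp [list_sum_map_range f k]

theorem stmt18 (n m : ℕ) (α : ℕ → ℕ)
    (h1 : ∀ i, 1 ≤ i → i ≤ m → 0 < α i)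
    (hsum : (Finset.range (m + 1)).sum α = n) :
    continuant ((List.range (m + 1)).map
        (fun i => α i + (if i = 0 then 1 else 0) + (if i = m then 1 else 0)))
      ≤ fibF (n + 2) ∧
    (continuant ((List.range (m + 1)).map
        (fun i => α i + (if i = 0 then 1 else 0) + (if i = m then 1 else 0)))
      = fibF (n + 2) ↔
      (m = n ∧ α 0 = 0 ∧ ∀ i, 1 ≤ i → i ≤ n → α i = 1) ∨
      (m + 1 = n ∧ ∀ i, i ≤ n - 1 → α i = 1)) := by
  set f : ℕ → ℕ := fun i => α i + (if i = 0 then 1 else 0) + (if i = m then 1 else 0) with hf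
  set L : List ℕ := (List.range (m + 1)).map f with hL
  have hfpos : ∀ i, i ≤ m → 1 ≤ f i := by
    intro i him
    rcases Nat.eq_zero_or_pos i with rfl | hi
    · simp only [hf]
      split_ifs <;> omega
    · have := h1 i hi him
      simp only [hf]
      split_ifs <;> omega
  have hposR : ∀ x ∈ L.reverse, 1 ≤ x := by
    intro x hx
    rw [List.mem_reverse] at hx
    rw [hL] at hx
    simp only [List.mem_map, List.mem_range] at hx
    obtain ⟨i, hi, rfl⟩ := hx
    exact hfpos i (by omega)
  have hsumf : ∑ i ∈ Finset.range (m + 1), f i = n + 2 := by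
    have e1 : ∑ i ∈ Finset.range (m + 1), f i
        = (∑ i ∈ Finset.range (m + 1), α i)
          + (∑ i ∈ Finset.range (m + 1), if i = 0 then 1 else 0)
          + (∑ i ∈ Finset.range (m + 1), if i = m then 1 else 0) := by
      simp only [hf]
      rw [Finset.sum_add_distrib, Finset.sum_add_distrib]
    have e2 : (∑ i ∈ Finset.range (m + 1), if i = 0 then (1:ℕ) else 0) = 1 := by
      rw [Finset.sum_ite_eq' (Finset.range (m + 1)) 0 (fun _ => (1:ℕ))]
      simp
    have e3 : (∑ i ∈ Finset.range (m + 1), if i = m then (1:ℕ) else 0) = 1 := by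
      rw [Finset.sum_ite_eq' (Finset.range (m + 1)) m (fun _ => (1:ℕ))]
      simp
    rw [e1, e2, e3, hsum]
  have hsumR : L.reverse.sum = n + 2 := by
    rw [List.sum_reverse, hL, list_sum_map_range]
    exact hsumf
  have hmain := contAux_le_fibF (n + 2) L.reverse hposR hsumR
  have hcL : continuant L = contAux L.reverse := rfl
  rw [hcL]
  refine ⟨hmain.1, ?_⟩
  rw [hmain.2]
  have hlenR : L.reverse.length = m + 1 := by simp [hL]
  -- now : Pal L.reverse ↔ RHS
  rcases Nat.eq_zero_or_pos m with rfl | hm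
  · -- m = 0
    have hα0n : α 0 = n := by simpa using hsum
    have hrev : L.reverse = [f 0] := by
      rw [hL]
      simp [List.range_succ]
    rw [hrev, Pal_single]
    have hf0 : f 0 = α 0 + 2 := by
      simp only [hf]
      split_ifs <;> omega
    rw [hf0]
    constructor
    · intro h01
      rcases Nat.le_one_iff_eq_zero_or_eq_one.mp (by omega : α 0 ≤ 1) with h0 | h0
      · left
        exact ⟨by omega, h0, fun i hi1 hi2 => by omega⟩
      · right
        exact ⟨by omega, fun i hi => by
          have : i = 0 := by omega
          subst this
          exact h0⟩
    · rintro (⟨hmn, h00, -⟩ | ⟨hmn, hall⟩)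
      · omega
      · have := hall 0 (by omega)
        omega
  · -- m ≥ 1
    have hgetR : ∀ i (h : i < L.reverse.length), L.reverse[i] = f (m - i) := by
      intro i h
      simp only [hL, List.getElem_reverse, List.getElem_map, List.getElem_range,
        List.length_map, List.length_range]
      congr 1
    have hf0 : f 0 = α 0 + 1 := by
      simp only [hf]
      split_ifs <;> omega
    have hfm : f m = α m + 1 := by
      simp only [hf]
      split_ifs <;> omega
    have hfmid : ∀ j, 0 < j → j < m → f j = α j := by
      intro j hj1 hj2
      simp only [hf]
      split_ifs <;> omega
    rw [Pal_iff_get L.reverse (by omega)]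
    have hiff : (∀ i (h : i < L.reverse.length),
        (0 < i → i + 1 < L.reverse.length → L.reverse[i] = 1) ∧
        (i = 0 ∨ i + 1 = L.reverse.length → L.reverse[i] ≤ 2)) ↔
        (α 0 ≤ 1 ∧ ∀ j, 1 ≤ j → j ≤ m → α j = 1) := by
      constructor
      · intro H
        constructor
        · have h2 := (H m (by omega)).2 (Or.inr (by omega))
          rw [hgetR m (by omega)] at h2
          rw [Nat.sub_self, hf0] at h2
          omega
        · intro j hj1 hjm
          by_cases hjm' : j = m
          · subst hjm'
            have h2 := (H 0 (by omega)).2 (Or.inl rfl)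
            rw [hgetR 0 (by omega), Nat.sub_zero, hfm] at h2
            have := h1 j hj1 hjm
            omega
          · have h2 := (H (m - j) (by omega)).1 (by omega) (by omega)
            rw [hgetR (m - j) (by omega)] at h2
            rw [show m - (m - j) = j by omega] at h2
            rw [hfmid j (by omega) (by omega)] at h2
            exact h2
      · rintro ⟨h0, hall⟩ i hilen
        constructor
        · intro hpos hlt
          rw [hgetR i hilen]
          rw [hfmid (m - i) (by omega) (by omega)]
          exact hall (m - i) (by omega) (by omega)
        · rintro (rfl | hlast)
          · rw [hgetR 0 hilen, Nat.sub_zero, hfm]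
            have := hall m (by omega) (le_refl m)
            omega
          · rw [hgetR i hilen, show m - i = 0 by omega, hf0]
            omega
    rw [hiff]
    have hsum2 : (∀ j, 1 ≤ j → j ≤ m → α j = 1) → α 0 + m = n := by
      intro hall
      have e0 : ∑ i ∈ Finset.range (m + 1), α i = n := hsum
      have e1 : ∑ i ∈ Finset.range (m + 1), α i
          = (∑ i ∈ Finset.range m, α (i + 1)) + α 0 := Finset.sum_range_succ' α m
      have e2 : ∑ i ∈ Finset.range m, α (i + 1) = m := by
        rw [Finset.sum_congr rfl (fun i hi => hall (i + 1) (by omega)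
          (by simp only [Finset.mem_range] at hi; omega))]
        simp
      omega
    constructor
    · rintro ⟨h0, hall⟩
      have hn := hsum2 hall
      rcases Nat.le_one_iff_eq_zero_or_eq_one.mp h0 with h00 | h01
      · left
        exact ⟨by omega, h00, fun i hi1 hi2 => hall i hi1 (by omega)⟩
      · right
        refine ⟨by omega, fun i hi => ?_⟩
        rcases Nat.eq_zero_or_pos i with rfl | hi0
        · exact h01
        · exact hall i hi0 (by omega)
    · rintro (⟨hmn, h00, hall⟩ | ⟨hmn, hall⟩)
      · exact ⟨by omega, fun j hj1 hj2 => hall j hj1 (by omega)⟩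
      · refine ⟨le_of_eq (hall 0 (by omega)), fun j hj1 hj2 => hall j (by omega)⟩
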